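/- Let 0 < τ_1 ≤ ... ≤ τ_n and S > 0. Define g(j) = (∑_{i=1}^j 1/τ_i)^{-1} (S + j). If j* is the smallest index achieving min_{j∈[n]} g(j), then τ_{j*} < min_{j∈[n]} g(j). -/
import Mathlib


theorem tau_lt_min_of_smallest_minimizer (n : ℕ) (hn : 1 ≤ n) (τ : ℕ → ℝ)
    (hpos : ∀ i ∈ Finset.Icc 1 n, 0 < τ i)
    (hmono : ∀ i j, 1 ≤ i → i ≤ j → j ≤ n → τ i ≤ τ j)
    (S : ℝ) (hS : 0 < S)
    (g : ℕ → ℝ) (hg : ∀ j, g j = (S + j) / ∑ i ∈ Finset.Icc 1 j, 1 / τ i)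
    (M : ℝ) (hM : M = (Finset.Icc 1 n).inf' (Finset.nonempty_Icc.mpr hn) g)
    (jstar : ℕ) (hjmem : jstar ∈ Finset.Icc 1 n) (hjmin : g jstar = M)
    (hsmallest : ∀ j ∈ Finset.Icc 1 n, g j = M → jstar ≤ j) :
    τ jstar < M := by
  obtain ⟨hj1, hjn⟩ := Finset.mem_Icc.mp hjmem
  have hτpos : 0 < τ jstar := hpos jstar hjmem
  have Hpos : ∀ k, 1 ≤ k → k ≤ n → 0 < ∑ i ∈ Finset.Icc 1 k, 1 / τ i := by
    intro k hk1 hkn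
    apply Finset.sum_pos
    · intro i hi
      obtain ⟨hi1, hik⟩ := Finset.mem_Icc.mp hi
      have := hpos i (Finset.mem_Icc.mpr ⟨hi1, hik.trans hkn⟩)
      positivity
    · exact Finset.nonempty_Icc.mpr hk1
  rcases eq_or_lt_of_le hj1 with h1 | h2
  · -- jstar = 1
    have hHj : ∑ i ∈ Finset.Icc 1 jstar, 1 / τ i = 1 / τ jstar := by
      rw [← h1]; simp
    rw [← hjmin, hg, hHj]
    rw [lt_div_iff₀ (by positivity)]
    have hcast : (jstar : ℝ) = 1 := by rw [← h1]; norm_num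
    rw [hcast]
    have : τ jstar * (1 / τ jstar) = 1 := by field_simp
    rw [this]; linarith
  · -- jstar ≥ 2
    set k := jstar - 1 with hk
    have hjk : jstar = k + 1 := by omega
    have hk1 : 1 ≤ k := by omega
    have hkn : k ≤ n := by omega
    have hkmem : k ∈ Finset.Icc 1 n := Finset.mem_Icc.mpr ⟨hk1, hkn⟩
    have hMle : M ≤ g k := hM ▸ Finset.inf'_le g hkmem
    have hne : g k ≠ M := fun h => by have := hsmallest k hkmem h; omega
    have hgk : M < g k := lt_of_le_of_ne hMle (Ne.symm hne)
    set H' := ∑ i ∈ Finset.Icc 1 k, 1 / τ i with hH'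
    have hH'pos : 0 < H' := Hpos k hk1 hkn
    set t := τ jstar with ht
    have hsplit : ∑ i ∈ Finset.Icc 1 jstar, 1 / τ i = H' + 1 / t := by
      rw [hjk, Finset.sum_Icc_succ_top (by omega : 1 ≤ k + 1), ← hjk]
    have hgjstar : M = (S + (k + 1 : ℝ)) / (H' + 1 / t) := by
      rw [← hjmin, hg, hsplit, hjk]; push_cast; ring_nf
    have hgkval : g k = (S + (k : ℝ)) / H' := by rw [hg]
    have hHpos2 : 0 < H' + 1 / t := by positivity
    -- from M < g k : (S+k+1)/(H'+1/t) < (S+k)/H'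
    have key : (S + (k : ℝ) + 1) / (H' + 1 / t) < (S + k) / H' := by
      rw [← hgkval]
      calc (S + (k : ℝ) + 1) / (H' + 1 / t) = M := by rw [hgjstar]; ring_nf
        _ < g k := hgk
    rw [div_lt_div_iff₀ hHpos2 hH'pos] at key
    -- key : (S+k+1)*H' < (S+k)*(H'+1/t)
    have ht0 : t ≠ 0 := ne_of_gt hτpos
    have hinv : t * (1 / t) = 1 := by field_simp
    have hcore : t * H' < S + k := by
      have h2 : H' < (S + k) * (1 / t) := by nlinarith
      have := mul_lt_mul_of_pos_left h2 hτpos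
      calc t * H' < t * ((S + k) * (1 / t)) := this
        _ = (S + k) * (t * (1 / t)) := by ring
        _ = S + k := by rw [hinv]; ring
    rw [hgjstar, lt_div_iff₀ hHpos2]
    calc t * (H' + 1 / t) = t * H' + t * (1 / t) := by ring
      _ = t * H' + 1 := by rw [hinv]
      _ < S + (k + 1 : ℝ) := by linarith
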